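/- Let M = 2^d and let a > 0 satisfy (M−1)a ≤ 1/(2√M) and a ≤ M^{−1/2}·M^{−1/p} for some 0 < p ≤ 1. Then there exists a subset F̃(M−1,a) ⊆ F(M−1,a) such that (i) ‖f − f′‖²_{L²(μ_d)} ≥ (M−1)a² for all distinct f, f′ ∈ F̃(M−1,a), and (ii) log|F̃(M−1,a)| ≥ (M−1)/8. -/

import Mathlib

open scoped BigOperators

namespace RWT

/-- The binary hypercube `{0,1}^d`, modeled as functions `Fin d → Bool`. -/
abbrev Cube (d : ℕ) := Fin d → Bool

/-- The dot product `s · x = ∑_j s_j x_j` of two binary strings (as a natural number). -/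
def dotc {k : ℕ} (s x : Cube k) : ℕ :=
  (Finset.univ.filter fun j => s j = true ∧ x j = true).card

/-- The Walsh function `χ_s(x) = 2^{-k/2} (-1)^{s·x}` on `{0,1}^k`. -/
noncomputable def walsh {k : ℕ} (s x : Cube k) : ℝ :=
  (-1 : ℝ) ^ dotc s x / Real.sqrt (2 ^ k)

/-- The inner product `⟨f,g⟩ = ∑_x f(x) g(x)` of `L²(μ_k)` (counting measure). -/
noncomputable def ip {k : ℕ} (f g : Cube k → ℝ) : ℝ := ∑ x : Cube k, f x * g x

/-- The Fourier–Walsh coefficient `θ_s = ⟨f, χ_s⟩`. -/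
noncomputable def theta {d : ℕ} (f : Cube d → ℝ) (s : Cube d) : ℝ := ip f (walsh s)

/-- The prefix map `π_k : {0,1}^d → {0,1}^k`. -/
def pref {d : ℕ} (k : ℕ) (h : k ≤ d) (x : Cube d) : Cube k :=
  fun j => x (Fin.castLE h j)

/-- The suffix map `σ_k : {0,1}^d → {0,1}^{d-k}`. -/
def suff {d : ℕ} (k : ℕ) (h : k ≤ d) (x : Cube d) : Cube (d - k) :=
  fun j => x ⟨k + j.val, by have := j.isLt; omega⟩

/-- Concatenation of `u ∈ {0,1}^k` and `v ∈ {0,1}^{d-k}` into a string in `{0,1}^d`. -/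
def concat {d k : ℕ} (h : k ≤ d) (u : Cube k) (v : Cube (d - k)) : Cube d :=
  fun i => if hi : i.val < k then u ⟨i.val, hi⟩ else v ⟨i.val - k, by have := i.isLt; omega⟩

/-- `f` is a probability density on `{0,1}^d` w.r.t. the counting measure. -/
def IsDensity {d : ℕ} (f : Cube d → ℝ) : Prop :=
  (∀ x, 0 ≤ f x) ∧ ∑ x : Cube d, f x = 1

/-- Membership of the coefficient vector `θ` in the weak-`ℓ^p` ball of radius `R`:
the decreasing rearrangement of `|θ|` satisfies `|θ_{(m)}| ≤ R m^{-1/p}` for `1 ≤ m ≤ 2^d`. -/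
def wlp (d : ℕ) (p R : ℝ) (θ : Cube d → ℝ) : Prop :=
  ∃ e : Fin (2 ^ d) ≃ Cube d,
    (∀ i j : Fin (2 ^ d), i ≤ j → |θ (e j)| ≤ |θ (e i)|) ∧
    ∀ m : Fin (2 ^ d), |θ (e m)| ≤ R * ((m.val : ℝ) + 1) ^ (-(1 / p))

/-- The sparsity class `F_d(p) = {f : θ(f) ∈ wℓ^p(1/√M)}`, `M = 2^d`. -/
def Fclass (d : ℕ) (p : ℝ) : Set (Cube d → ℝ) :=
  {f | wlp d p (1 / Real.sqrt (2 ^ d)) (theta f)}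

/-- The class `F^{+,1}_d(p)` of probability densities in `F_d(p)`. -/
def FclassDens (d : ℕ) (p : ℝ) : Set (Cube d → ℝ) :=
  {f | f ∈ Fclass d p ∧ IsDensity f}

/-- Empirical Fourier–Walsh coefficient `θ̂_s = (1/n) ∑_i χ_s(x_i)`. -/
noncomputable def thetaHat {d n : ℕ} (xs : Fin n → Cube d) (s : Cube d) : ℝ :=
  (1 / (n : ℝ)) * ∑ i, walsh s (xs i)

/-- The weight estimate
`Ŵ_u = (1/n²) ∑_i ∑_j χ_u(π_k(x_i)) χ_u(π_k(x_j)) 1{σ_k(x_i) = σ_k(x_j)}`. -/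
noncomputable def What {d : ℕ} (k : ℕ) (h : k ≤ d) {n : ℕ} (xs : Fin n → Cube d)
    (u : Cube k) : ℝ :=
  (1 / (n : ℝ) ^ 2) * ∑ i, ∑ j,
    walsh u (pref k h (xs i)) * walsh u (pref k h (xs j)) *
      (if suff k h (xs i) = suff k h (xs j) then (1 : ℝ) else 0)

/-- `f_u = ∑_{v ∈ {0,1}^{d-k}} θ_{uv} χ_v ∈ L²(μ_{d-k})`. -/
noncomputable def fu {d : ℕ} (k : ℕ) (h : k ≤ d) (f : Cube d → ℝ) (u : Cube k) :
    Cube (d - k) → ℝ :=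
  fun y => ∑ v : Cube (d - k), theta f (concat h u v) * walsh v y

/-- The empirical counterpart `f̂_u = ∑_v θ̂_{uv} χ_v`. -/
noncomputable def fuHat {d n : ℕ} (k : ℕ) (h : k ≤ d) (xs : Fin n → Cube d) (u : Cube k) :
    Cube (d - k) → ℝ :=
  fun y => ∑ v : Cube (d - k), thetaHat xs (concat h u v) * walsh v y

/-- The weight `W_u = ∑_v θ_{uv}²`. -/
noncomputable def Wu {d : ℕ} (k : ℕ) (h : k ≤ d) (f : Cube d → ℝ) (u : Cube k) : ℝ :=
  ∑ v : Cube (d - k), (theta f (concat h u v)) ^ 2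

/-- The empirical weight `Ŵ_u = ∑_v θ̂_{uv}²` (in direct form). -/
noncomputable def WuHat {d n : ℕ} (k : ℕ) (h : k ≤ d) (xs : Fin n → Cube d) (u : Cube k) : ℝ :=
  ∑ v : Cube (d - k), (thetaHat xs (concat h u v)) ^ 2

/-- The recursive Walsh thresholding estimator
`f̂_RWT = ∑_{s ∈ A(λ)} θ̂_s χ_s`, where
`A(λ) = {s : Ŵ_{π_k(s)} ≥ λ_k for all 1 ≤ k ≤ d}`. -/
noncomputable def fRWT {d n : ℕ} (lam : ℕ → ℝ) (xs : Fin n → Cube d) : Cube d → ℝ :=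
  fun x => ∑ s : Cube d,
    Set.indicator
      {s' : Cube d | ∀ k, ∀ hk : k ≤ d, 1 ≤ k → lam k ≤ What k hk xs (pref k hk s')}
      (fun s' => thetaHat xs s') s * walsh s x

/-- Expectation over an i.i.d. sample `X_1, …, X_n` drawn from the density `f`:
`E_f[g(X₁,…,Xₙ)] = ∑_{x₁,…,xₙ} (∏_i f(xᵢ)) g(x₁,…,xₙ)`. -/
noncomputable def expSample {d n : ℕ} (f : Cube d → ℝ) (g : (Fin n → Cube d) → ℝ) : ℝ :=
  ∑ xs : Fin n → Cube d, (∏ i, f (xs i)) * g xs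

/-- The packing family `F(k,a)`: densities whose Walsh coefficient at the lexicographically
first string `s₁ = (0,…,0)` equals `1/√M`, and whose remaining `M-1` coefficients have exactly
`k` nonzero entries, each equal to `a` or `-a`. -/
def Fka (d k : ℕ) (a : ℝ) : Set (Cube d → ℝ) :=
  {f | theta f (fun _ => false) = 1 / Real.sqrt (2 ^ d) ∧
       (∀ s : Cube d, s ≠ (fun _ => false) →
          theta f s = 0 ∨ theta f s = a ∨ theta f s = -a) ∧
       {s : Cube d | s ≠ (fun _ => false) ∧ theta f s ≠ 0}.ncard = k}


lemma neg_one_pow_dotc {d : ℕ} (s x : Cube d) :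
    (-1 : ℝ) ^ dotc s x = ∏ j, (if s j = true ∧ x j = true then (-1 : ℝ) else 1) := by
  rw [dotc, Finset.card_filter, ← Finset.prod_pow_eq_pow_sum]
  exact Finset.prod_congr rfl fun j _ => by split <;> simp

lemma walsh_ortho {d : ℕ} (s t : Cube d) :
    ip (walsh s) (walsh t) = if s = t then 1 else 0 := by
  have hsq : Real.sqrt (2 ^ d) * Real.sqrt (2 ^ d) = 2 ^ d :=
    Real.mul_self_sqrt (by positivity)
  have key : ∑ x : Cube d, ((-1 : ℝ) ^ dotc s x * (-1 : ℝ) ^ dotc t x)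
      = if s = t then (2 : ℝ) ^ d else 0 := by
    have : ∀ x : Cube d, (-1 : ℝ) ^ dotc s x * (-1 : ℝ) ^ dotc t x
        = ∏ j, ((if s j = true ∧ x j = true then (-1 : ℝ) else 1) *
                (if t j = true ∧ x j = true then (-1 : ℝ) else 1)) := by
      intro x
      rw [neg_one_pow_dotc, neg_one_pow_dotc, ← Finset.prod_mul_distrib]
    simp_rw [this]
    rw [← Fintype.prod_sum (fun j (b : Bool) =>
      (if s j = true ∧ b = true then (-1 : ℝ) else 1) *
      (if t j = true ∧ b = true then (-1 : ℝ) else 1))]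
    by_cases hst : s = t
    · subst hst
      simp only [if_pos rfl]
      have : ∀ j, (∑ b : Bool, (if s j = true ∧ b = true then (-1 : ℝ) else 1) *
          (if s j = true ∧ b = true then (-1 : ℝ) else 1)) = 2 := by
        intro j; cases h : s j <;> simp [Fintype.sum_bool] <;> norm_num
      rw [Finset.prod_congr rfl fun j _ => this j]
      simp
    · rw [if_neg hst]
      obtain ⟨j, hj⟩ : ∃ j, s j ≠ t j := by
        by_contra h; push_neg at h; exact hst (funext h)
      apply Finset.prod_eq_zero (Finset.mem_univ j)
      cases hs : s j <;> cases ht : t j <;> simp_all [Fintype.sum_bool]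
  rw [ip]
  have : ∀ x : Cube d, walsh s x * walsh t x
      = ((-1 : ℝ) ^ dotc s x * (-1 : ℝ) ^ dotc t x) / (2 : ℝ) ^ d := by
    intro x; rw [walsh, walsh, div_mul_div_comm, hsq]
  simp_rw [this, ← Finset.sum_div, key]
  split <;> simp [ne_of_gt (show (0:ℝ) < 2 ^ d by positivity)]

lemma sum_walsh_ortho {d : ℕ} (s t : Cube d) :
    ∑ x : Cube d, walsh s x * walsh t x = if s = t then 1 else 0 := walsh_ortho s t

noncomputable def gfun (d : ℕ) (c : Cube d → ℝ) : Cube d → ℝ :=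
  fun x => ∑ s, c s * walsh s x

lemma theta_gfun (d : ℕ) (c : Cube d → ℝ) (t : Cube d) : theta (gfun d c) t = c t := by
  rw [theta, ip]
  simp_rw [gfun, Finset.sum_mul, mul_assoc]
  rw [Finset.sum_comm]
  have : ∀ s : Cube d, ∑ x : Cube d, c s * (walsh s x * walsh t x)
      = c s * (if s = t then 1 else 0) := by
    intro s; rw [← Finset.mul_sum, sum_walsh_ortho]
  simp_rw [this]
  simp

lemma parseval (d : ℕ) (c : Cube d → ℝ) :
    ∑ x : Cube d, (gfun d c x) ^ 2 = ∑ s : Cube d, (c s) ^ 2 := by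
  simp_rw [sq, gfun, Finset.sum_mul_sum]
  rw [Finset.sum_comm]
  have : ∀ s : Cube d, ∑ x : Cube d, ∑ t : Cube d, (c s * walsh s x) * (c t * walsh t x)
      = c s ^ 2 := by
    intro s
    rw [Finset.sum_comm]
    have h2 : ∀ t : Cube d, ∑ x : Cube d, (c s * walsh s x) * (c t * walsh t x)
        = c s * c t * (if s = t then 1 else 0) := by
      intro t
      have : ∀ x : Cube d, (c s * walsh s x) * (c t * walsh t x)
          = c s * c t * (walsh s x * walsh t x) := fun x => by ring
      simp_rw [this, ← Finset.mul_sum, sum_walsh_ortho]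
    simp_rw [h2]
    simp [sq]
  simp_rw [this, pow_two]

-- counting: ball of radius < t has at most ∑_{k<t} C(m,k) elements
lemma ball_card_le (ι : Type) [Fintype ι] [DecidableEq ι] (t : ℕ) (c : ι → Bool) :
    (Finset.univ.filter fun y : ι → Bool => hammingDist y c < t).card
      ≤ ∑ k ∈ Finset.range t, (Fintype.card ι).choose k := by
  classical
  have h1 : (Finset.univ.filter fun y : ι → Bool => hammingDist y c < t).card
      ≤ (Finset.univ.filter fun A : Finset ι => A.card < t).card := by
    apply Finset.card_le_card_of_injOn (fun y => Finset.univ.filter fun i => y i ≠ c i)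
    · intro y hy
      simp only [Finset.mem_coe, Finset.mem_filter, Finset.mem_univ, true_and] at hy ⊢
      exact hy
    · intro y hy y' hy' h
      funext i
      have := Finset.ext_iff.mp h i
      simp only [Finset.mem_filter, Finset.mem_univ, true_and] at this
      by_cases hi : y i = c i
      · by_cases hi' : y' i = c i
        · rw [hi, hi']
        · exact absurd (this.mpr hi') (by simp [hi])
      · have := this.mp hi
        revert hi this
        cases y i <;> cases y' i <;> cases c i <;> simp
  refine h1.trans ?_
  have h2 : (Finset.univ.filter fun A : Finset ι => A.card < t)
      ⊆ (Finset.range t).biUnion fun k => Finset.powersetCard k Finset.univ := by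
    intro A hA
    simp only [Finset.mem_filter, Finset.mem_univ, true_and] at hA
    simp only [Finset.mem_biUnion, Finset.mem_range, Finset.mem_powersetCard]
    exact ⟨A.card, hA, A.subset_univ, rfl⟩
  refine (Finset.card_le_card h2).trans ?_
  refine (Finset.card_biUnion_le).trans ?_
  apply Finset.sum_le_sum
  intro k _
  rw [Finset.card_powersetCard, Finset.card_univ]


lemma vol_bound (m t : ℕ) (ht : 1 ≤ t) (htm : t ≤ m + 1) :
    (∑ k ∈ Finset.range t, m.choose k) * 3 ^ (m - (t - 1)) ≤ 4 ^ m := by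
  have key : ∑ k ∈ Finset.range (m+1), m.choose k * 3 ^ (m - k) = 4 ^ m := by
    have h4 := (add_pow 3 1 m : (3 + 1 : ℕ) ^ m = _)
    rw [show (3+1 : ℕ) = 4 from rfl] at h4
    rw [h4, ← Finset.sum_range_reflect]
    apply Finset.sum_congr rfl
    intro k hk
    rw [Finset.mem_range] at hk
    have hk' : k ≤ m := by omega
    rw [show m + 1 - 1 - k = m - k from by omega, Nat.choose_symm hk',
      Nat.sub_sub_self hk']
    simp
    ring
  calc (∑ k ∈ Finset.range t, m.choose k) * 3 ^ (m - (t - 1))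
      = ∑ k ∈ Finset.range t, m.choose k * 3 ^ (m - (t - 1)) := by rw [Finset.sum_mul]
    _ ≤ ∑ k ∈ Finset.range t, m.choose k * 3 ^ (m - k) := by
        apply Finset.sum_le_sum
        intro k hk
        rw [Finset.mem_range] at hk
        exact Nat.mul_le_mul_left _ (Nat.pow_le_pow_right (by norm_num) (by omega))
    _ ≤ ∑ k ∈ Finset.range (m+1), m.choose k * 3 ^ (m - k) :=
        Finset.sum_le_sum_of_subset (Finset.range_subset_range.mpr htm)
    _ = 4 ^ m := key

lemma VG (ι : Type) [Fintype ι] [DecidableEq ι] (m : ℕ) (hm : Fintype.card ι = m)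
    (hm1 : 1 ≤ m) :
    ∃ S : Finset (ι → Bool),
      (∀ ω ∈ S, ∀ ω' ∈ S, ω ≠ ω' → (m + 3) / 4 ≤ hammingDist ω ω') ∧
      (m : ℝ) / 8 ≤ Real.log S.card := by
  classical
  set t := (m + 3) / 4 with hts
  have ht1 : 1 ≤ t := by omega
  have htm : t ≤ m + 1 := by omega
  set T : Finset (Finset (ι → Bool)) :=
    Finset.univ.filter (fun A : Finset (ι → Bool) =>
      ∀ ω ∈ A, ∀ ω' ∈ A, ω ≠ ω' → t ≤ hammingDist ω ω') with hT
  have hTne : T.Nonempty := ⟨∅, by simp [hT]⟩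
  obtain ⟨S, hSmem, hSmax⟩ := Finset.exists_max_image T Finset.card hTne
  rw [hT, Finset.mem_filter] at hSmem
  have hSP := hSmem.2
  refine ⟨S, fun ω hω ω' hω' hne => hSP ω hω ω' hω' hne, ?_⟩
  -- covering property
  have hcover : ∀ y : ι → Bool, ∃ c ∈ S, hammingDist y c < t := by
    intro y
    by_contra hno
    push_neg at hno
    have hyS : y ∉ S := fun hy => by
      have := hno y hy
      simp [hammingDist_self] at this
      omega
    have hins : insert y S ∈ T := by
      rw [hT, Finset.mem_filter]
      refine ⟨Finset.mem_univ _, ?_⟩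
      intro ω hω ω' hω' hne
      rcases Finset.mem_insert.mp hω with h1 | h1 <;>
        rcases Finset.mem_insert.mp hω' with h2 | h2
      · exact absurd (h1.trans h2.symm) hne
      · subst h1; exact hno ω' h2
      · subst h2; rw [hammingDist_comm]; exact hno ω h1
      · exact hSP ω h1 ω' h2 hne
    have := hSmax (insert y S) hins
    rw [Finset.card_insert_of_notMem hyS] at this
    omega
  set V := ∑ k ∈ Finset.range t, m.choose k with hV
  -- counting
  have hcount : 2 ^ m ≤ S.card * V := by
    have hsub : (Finset.univ : Finset (ι → Bool))
        ⊆ S.biUnion fun c => Finset.univ.filter fun y => hammingDist y c < t := by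
      intro y _
      obtain ⟨c, hc, hlt⟩ := hcover y
      exact Finset.mem_biUnion.mpr ⟨c, hc, by simp [hlt]⟩
    have h1 : 2 ^ m ≤ (S.biUnion fun c =>
        Finset.univ.filter fun y => hammingDist y c < t).card := by
      have := Finset.card_le_card hsub
      rwa [Finset.card_univ, Fintype.card_fun, hm, Fintype.card_bool] at this
    refine h1.trans (Finset.card_biUnion_le.trans ?_)
    calc ∑ c ∈ S, (Finset.univ.filter fun y => hammingDist y c < t).card
        ≤ ∑ _c ∈ S, V := by
          apply Finset.sum_le_sum
          intro c _
          have := ball_card_le ι t c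
          rwa [hm] at this
      _ = S.card * V := by rw [Finset.sum_const, smul_eq_mul]
  -- S is nonempty (a singleton is a valid packing)
  have hS1 : 1 ≤ S.card := by
    have hmem : ({fun _ => false} : Finset (ι → Bool)) ∈ T := by
      rw [hT, Finset.mem_filter]
      refine ⟨Finset.mem_univ _, ?_⟩
      intro ω hω ω' hω' hne
      rw [Finset.mem_singleton] at hω hω'
      exact absurd (hω.trans hω'.symm) hne
    have := hSmax _ hmem
    simpa using this
  -- volume bound
  have hvol : V * 3 ^ (m - (t - 1)) ≤ 4 ^ m := vol_bound m t ht1 htm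
  -- real-number chain
  have hr : ((t : ℝ) - 1) ≤ (m : ℝ) / 4 := by
    have h4 : 4 * t ≤ m + 3 := by omega
    have h4' : (4 : ℝ) * t ≤ (m : ℝ) + 3 := by exact_mod_cast h4
    linarith
  have hV1 : 1 ≤ V := by
    rw [hV]
    calc 1 = ∑ k ∈ Finset.range 1, m.choose k := by simp
      _ ≤ _ := Finset.sum_le_sum_of_subset (Finset.range_subset_range.mpr ht1)
  -- N ≥ 2^m * 3^(m-(t-1)) / 4^m
  have hNpos : (0 : ℝ) < S.card := by exact_mod_cast hS1
  have hkey : (2 : ℝ) ^ m * 3 ^ (m - (t - 1)) ≤ (S.card : ℝ) * 4 ^ m := by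
    calc (2 : ℝ) ^ m * 3 ^ (m - (t - 1))
        ≤ ((S.card : ℝ) * V) * 3 ^ (m - (t - 1)) := by
          apply mul_le_mul_of_nonneg_right _ (by positivity)
          exact_mod_cast hcount
      _ = (S.card : ℝ) * (V * 3 ^ (m - (t - 1))) := by ring
      _ ≤ (S.card : ℝ) * 4 ^ m := by
          apply mul_le_mul_of_nonneg_left _ (by positivity)
          exact_mod_cast hvol
  -- take logs
  have hlog : (m : ℝ) * Real.log 2 + ((m : ℝ) - ((t : ℝ) - 1)) * Real.log 3
      - (m : ℝ) * Real.log 4 ≤ Real.log S.card := by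
    have hmr : ((m - (t - 1) : ℕ) : ℝ) = (m : ℝ) - ((t : ℝ) - 1) := by
      have h1 : t - 1 ≤ m := by omega
      have h2 : 1 ≤ t := ht1
      push_cast [Nat.cast_sub h1, Nat.cast_sub h2]
      ring
    have h1 : Real.log ((2 : ℝ) ^ m * 3 ^ (m - (t - 1))) ≤ Real.log ((S.card : ℝ) * 4 ^ m) :=
      Real.log_le_log (by positivity) hkey
    rw [Real.log_mul (by positivity) (by positivity),
        Real.log_mul (by positivity) (by positivity),
        Real.log_pow, Real.log_pow, Real.log_pow] at h1
    rw [hmr] at h1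
    linarith
  -- numerics: log(27/16) ≥ 1/2
  have hnum : (1 : ℝ) / 2 ≤ 3 * Real.log 3 - 4 * Real.log 2 := by
    have h2716 : Real.log (27 / 16 : ℝ) = 3 * Real.log 3 - 4 * Real.log 2 := by
      rw [Real.log_div (by norm_num) (by norm_num),
        show (27 : ℝ) = 3 ^ 3 by norm_num, show (16 : ℝ) = 2 ^ 4 by norm_num,
        Real.log_pow, Real.log_pow]
      push_cast; ring
    rw [← h2716, Real.le_log_iff_exp_le (by norm_num)]
    rw [show (1:ℝ)/2 = 1/2 from rfl, Real.exp_half]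
    have h1 : Real.exp 1 ≤ (729 / 256 : ℝ) :=
      le_of_lt (lt_trans Real.exp_one_lt_d9 (by norm_num))
    calc Real.sqrt (Real.exp 1) ≤ Real.sqrt (729/256) := Real.sqrt_le_sqrt h1
      _ = 27/16 := by
          rw [show (729/256 : ℝ) = (27/16)^2 by norm_num, Real.sqrt_sq (by norm_num)]
  have hlog4 : Real.log (4:ℝ) = 2 * Real.log 2 := by
    rw [show (4:ℝ) = 2^2 by norm_num, Real.log_pow]; push_cast; ring
  have hlog3 : 0 ≤ Real.log (3:ℝ) := Real.log_nonneg (by norm_num)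
  have hm0 : (0:ℝ) ≤ m := Nat.cast_nonneg m
  rw [hlog4] at hlog
  nlinarith [hlog, hnum, hr, hlog3, hm0,
    mul_le_mul_of_nonneg_right hr hlog3]


/-- **Lemma 3, item 3.** Let `M = 2^d` and let `a > 0` satisfy
`(M-1)a ≤ 1/(2√M)` and `a ≤ M^{-1/2} M^{-1/p}` for some `0 < p ≤ 1`. Then there exists a
subset `F̃(M-1,a) ⊆ F(M-1,a)` such that `‖f - f'‖² ≥ (M-1)a²` for all distinct
`f, f' ∈ F̃(M-1,a)` and `log|F̃(M-1,a)| ≥ (M-1)/8`. -/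
theorem Fka_packing_full (d : ℕ) (hd : 1 ≤ d) (p : ℝ) (hp0 : 0 < p) (hp1 : p ≤ 1)
    (a : ℝ) (ha : 0 < a)
    (h1 : ((2 : ℝ) ^ d - 1) * a ≤ 1 / (2 * Real.sqrt (2 ^ d)))
    (h2 : a ≤ (1 / Real.sqrt (2 ^ d)) * ((2 : ℝ) ^ d) ^ (-(1 / p))) :
    ∃ FF : Finset (Cube d → ℝ),
      ↑FF ⊆ Fka d (2 ^ d - 1) a ∧
      (∀ f ∈ FF, ∀ f' ∈ FF, f ≠ f' →
        ((2 : ℝ) ^ d - 1) * a ^ 2 ≤ ∑ x : Cube d, (f x - f' x) ^ 2) ∧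
      ((2 : ℝ) ^ d - 1) / 8 ≤ Real.log (FF.card : ℝ) := by
  classical
  set zero : Cube d := (fun _ => false) with hzero
  set m : ℕ := 2 ^ d - 1 with hmdef
  have h2d : 2 ≤ 2 ^ d := by
    calc 2 = 2 ^ 1 := rfl
    _ ≤ 2 ^ d := Nat.pow_le_pow_right (by norm_num) hd
  have hm1 : 1 ≤ m := by omega
  have hcastm : ((2 : ℝ) ^ d - 1) = (m : ℝ) := by
    rw [hmdef]
    push_cast [Nat.cast_sub (by omega : 1 ≤ 2 ^ d)]
    ring
  -- the index type of nonzero frequencies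
  have hcard : Fintype.card {s : Cube d // s ≠ zero} = m := by
    rw [Fintype.card_subtype_compl, Fintype.card_subtype_eq, Fintype.card_fun,
      Fintype.card_bool, Fintype.card_fin, hmdef]
  obtain ⟨S, hSdist, hSlog⟩ := VG {s : Cube d // s ≠ zero} m hcard hm1
  set t : ℕ := (m + 3) / 4 with htdef
  have h4t : m ≤ 4 * t := by omega
  -- the coefficient vectors and functions
  set coef : ({s : Cube d // s ≠ zero} → Bool) → Cube d → ℝ :=
    fun ω s => if h : s = zero then 1 / Real.sqrt (2 ^ d)
      else a * (if ω ⟨s, h⟩ then 1 else -1) with hcoef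
  set fmap : ({s : Cube d // s ≠ zero} → Bool) → Cube d → ℝ :=
    fun ω => gfun d (coef ω) with hfmap
  have htheta : ∀ ω s, theta (fmap ω) s = coef ω s := fun ω s => theta_gfun d (coef ω) s
  have hinj : Function.Injective fmap := by
    intro ω ω' h
    funext i
    have h1 : coef ω i.val = coef ω' i.val := by
      rw [← htheta, ← htheta, h]
    rw [hcoef] at h1
    simp only [dif_neg i.prop, Subtype.coe_eta] at h1
    cases hb : ω i <;> cases hb' : ω' i <;> simp [hb, hb'] at h1 <;> first
      | rfl
      | (exfalso; nlinarith)
  refine ⟨S.image fmap, ?_, ?_, ?_⟩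
  · -- subset of Fka
    intro f hf
    simp only [Finset.coe_image, Set.mem_image, Finset.mem_coe] at hf
    obtain ⟨ω, _, rfl⟩ := hf
    refine ⟨?_, ?_, ?_⟩
    · rw [htheta, hcoef]
      simp [hzero]
    · intro s hs
      have hs' : s ≠ zero := by rw [hzero]; exact hs
      rw [htheta]
      simp only [hcoef, dif_neg hs']
      cases hb : ω ⟨s, hs'⟩ <;> simp [hb]
    · have hset : {s : Cube d | s ≠ (fun _ => false) ∧ theta (fmap ω) s ≠ 0}
          = ({zero} : Set (Cube d))ᶜ := by
        ext s
        simp only [Set.mem_setOf_eq, Set.mem_compl_iff, Set.mem_singleton_iff, ← hzero]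
        constructor
        · exact fun h => h.1
        · intro h
          refine ⟨h, ?_⟩
          rw [htheta, hcoef]
          simp only [dif_neg h]
          cases hb : ω ⟨s, h⟩ <;> simp [hb] <;> positivity
      rw [hset, Set.ncard_eq_toFinset_card']
      simp [Finset.card_compl, Fintype.card_fun, hmdef]
  · -- pairwise distance
    intro f hf f' hf' hne
    simp only [Finset.mem_image] at hf hf'
    obtain ⟨ω, hωS, rfl⟩ := hf
    obtain ⟨ω', hω'S, rfl⟩ := hf'
    have hωne : ω ≠ ω' := fun h => hne (by rw [h])
    have hdist := hSdist ω hωS ω' hω'S hωne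
    -- Parseval
    have hsum : ∑ x : Cube d, (fmap ω x - fmap ω' x) ^ 2
        = ∑ s : Cube d, (coef ω s - coef ω' s) ^ 2 := by
      have hx : ∀ x, fmap ω x - fmap ω' x = gfun d (fun s => coef ω s - coef ω' s) x := by
        intro x
        simp [hfmap, gfun, sub_mul, Finset.sum_sub_distrib]
      simp_rw [hx]
      exact parseval d _
    rw [hsum]
    -- lower bound the coefficient sum
    have hnn : ∀ s ∈ (Finset.univ : Finset (Cube d)) \ Finset.univ.filter (· ≠ zero),
        (0:ℝ) ≤ (coef ω s - coef ω' s) ^ 2 := fun s _ => sq_nonneg _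
    have hstep1 : ∑ s ∈ Finset.univ.filter (· ≠ zero), (coef ω s - coef ω' s) ^ 2
        ≤ ∑ s : Cube d, (coef ω s - coef ω' s) ^ 2 :=
      Finset.sum_le_sum_of_subset_of_nonneg (Finset.filter_subset _ _)
        (fun s hs _ => sq_nonneg _)
    have hstep2 : ∑ s ∈ Finset.univ.filter (· ≠ zero), (coef ω s - coef ω' s) ^ 2
        = ∑ i : {s : Cube d // s ≠ zero}, (coef ω i.val - coef ω' i.val) ^ 2 := by
      exact Finset.sum_subtype (p := fun s => s ≠ zero)
        (Finset.univ.filter (· ≠ zero)) (by simp) (fun s => (coef ω s - coef ω' s) ^ 2)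
    have hstep3 : ∑ i : {s : Cube d // s ≠ zero}, (coef ω i.val - coef ω' i.val) ^ 2
        = 4 * a ^ 2 * (hammingDist ω ω' : ℝ) := by
      have hterm : ∀ i : {s : Cube d // s ≠ zero}, (coef ω i.val - coef ω' i.val) ^ 2
          = if ω i ≠ ω' i then 4 * a ^ 2 else 0 := by
        intro i
        rw [hcoef]
        simp only [dif_neg i.prop, Subtype.coe_eta]
        cases hb : ω i <;> cases hb' : ω' i <;> simp [hb, hb'] <;> ring
      simp_rw [hterm]
      rw [Finset.sum_ite, Finset.sum_const, Finset.sum_const, hammingDist]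
      simp only [nsmul_eq_mul, smul_zero, add_zero]
      ring
    have hcastt : (m : ℝ) ≤ 4 * (hammingDist ω ω' : ℝ) := by
      have : m ≤ 4 * hammingDist ω ω' := le_trans h4t (by omega)
      exact_mod_cast this
    calc ((2:ℝ) ^ d - 1) * a ^ 2 = (m : ℝ) * a ^ 2 := by rw [hcastm]
      _ ≤ 4 * (hammingDist ω ω' : ℝ) * a ^ 2 := by nlinarith [sq_nonneg a]
      _ = 4 * a ^ 2 * (hammingDist ω ω' : ℝ) := by ring
      _ = ∑ i : {s : Cube d // s ≠ zero}, (coef ω i.val - coef ω' i.val) ^ 2 := hstep3.symm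
      _ = ∑ s ∈ Finset.univ.filter (· ≠ zero), (coef ω s - coef ω' s) ^ 2 := hstep2.symm
      _ ≤ _ := hstep1
  · -- log cardinality
    rw [Finset.card_image_of_injective S hinj, hcastm]
    exact hSlog

end RWT
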